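/- arXiv:0810.5706 — 2 statements merged into one kernel-verified Lean document; each statement's English description precedes it below -/
import Mathlib

section
/- Let F be a distribution function with upper endpoint x_F ∈ (0,∞] in the Gumbel max-domain of attraction with positive scaling function w, i.e. \bar F(t + x/w(t))/\bar F(t) → e^{−x} for all x ∈ ℝ as t ↑ x_F. Then for any β ∈ ℝ and any μ > 1, (u·w(u))^β · \bar F(μu)/\bar F(u) → 0 as u ↑ x_F (here x_F = ∞ for the case μu to make sense). -/
open MeasureTheory Filter Real Set Topology

/-- Auxiliary chain: iterate `t ↦ t + x / w t` starting from `u`. -/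
noncomputable def gchain (w : ℝ → ℝ) (x u : ℝ) : ℕ → ℝ
  | 0 => u
  | k + 1 => gchain w x u k + x / w (gchain w x u k)

lemma gchain_zero (w : ℝ → ℝ) (x u : ℝ) : gchain w x u 0 = u := rfl

lemma gchain_succ (w : ℝ → ℝ) (x u : ℝ) (k : ℕ) :
    gchain w x u (k + 1) = gchain w x u k + x / w (gchain w x u k) := rfl

set_option maxHeartbeats 2000000 in
/-- If `F` (on `(0,∞)`, infinite upper endpoint) is in the Gumbel
max-domain of attraction with positive scaling function `w`, then for any `β ∈ ℝ` and
`μ' > 1`, `(u w(u))^β * F̄(μ' u)/F̄(u) → 0` as `u → ∞`. -/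
theorem stmt2
    (μ : Measure ℝ) [IsProbabilityMeasure μ] (hsupp : μ (Iic 0) = 0)
    (hend : ∀ s : ℝ, 0 < μ (Ioi s))
    (Fbar : ℝ → ℝ) (hFbar : ∀ u, Fbar u = (μ (Ioi u)).toReal)
    (w : ℝ → ℝ) (hw : ∀ u > (0 : ℝ), 0 < w u)
    (hGumbel : ∀ x : ℝ,
      Tendsto (fun u => Fbar (u + x / w u) / Fbar u) atTop (nhds (Real.exp (-x))))
    (β m : ℝ) (hm : 1 < m) :
    Tendsto (fun u => (u * w u) ^ β * (Fbar (m * u) / Fbar u)) atTop (nhds 0) := by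
  have hμne : ∀ s : ℝ, μ (Ioi s) ≠ ⊤ := fun s => measure_ne_top μ _
  have hFpos : ∀ u : ℝ, 0 < Fbar u := by
    intro u; rw [hFbar]
    exact ENNReal.toReal_pos (hend u).ne' (hμne u)
  have hFanti : ∀ ⦃s t : ℝ⦄, s ≤ t → Fbar t ≤ Fbar s := by
    intro s t hst; rw [hFbar, hFbar]
    exact (ENNReal.toReal_le_toReal (hμne t) (hμne s)).2
      (measure_mono (Ioi_subset_Ioi hst))
  have hFone : ∀ s : ℝ, s ≤ 0 → Fbar s = 1 := by
    intro s hs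
    have h0 : μ (Iic s) = 0 := measure_mono_null (Iic_subset_Iic.mpr hs) hsupp
    have : μ (Ioi s) = 1 := by
      have := measure_compl (measurableSet_Iic (a := s)) (measure_ne_top μ _)
      rw [compl_Iic] at this
      simp [this, h0]
    rw [hFbar, this, ENNReal.toReal_one]
  -- Fbar tends to 0 at atTop
  have hF0 : Tendsto Fbar atTop (𝓝 0) := by
    have h1 : Tendsto (fun t : ℝ => μ (Ioi t)) atTop (𝓝 (μ (⋂ t : ℝ, Ioi t))) :=
      tendsto_measure_iInter_atTop (fun t => (measurableSet_Ioi).nullMeasurableSet)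
        (fun a b hab => Ioi_subset_Ioi hab) ⟨0, hμne 0⟩
    have hempty : (⋂ t : ℝ, Ioi t) = ∅ := by
      apply eq_empty_iff_forall_notMem.2
      intro y hy
      have := mem_iInter.1 hy (y + 1)
      simp at this; linarith
    rw [hempty, measure_empty] at h1
    have h2 : Tendsto (fun t : ℝ => (μ (Ioi t)).toReal) atTop (𝓝 0) := by
      have := (ENNReal.tendsto_toReal ENNReal.zero_ne_top).comp h1
      exact this
    have : Fbar = fun t : ℝ => (μ (Ioi t)).toReal := funext hFbar
    rw [this]; exact h2
  -- u * w u → ∞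
  have hUW : Tendsto (fun u => u * w u) atTop atTop := by
    rw [tendsto_atTop]
    intro L
    set L' := max L 1 with hL'
    have hL'pos : (0:ℝ) < L' := lt_of_lt_of_le one_pos (le_max_right _ _)
    have hg := hGumbel (-(2 * L'))
    rw [neg_neg] at hg
    have h1 : ∀ᶠ u in atTop,
        Fbar (u + -(2 * L') / w u) / Fbar u < Real.exp (2 * L') + 1 :=
      hg.eventually (eventually_lt_nhds (by linarith))
    have h2 : ∀ᶠ u in atTop, Fbar u < (Real.exp (2 * L') + 1)⁻¹ :=
      hF0.eventually (eventually_lt_nhds (by positivity))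
    filter_upwards [h1, h2, eventually_gt_atTop (0:ℝ)] with u hu1 hu2 hu0
    have hwu := hw u hu0
    have hFu := hFpos u
    have hnum : Fbar (u + -(2 * L') / w u) < 1 := by
      have h3 : Fbar (u + -(2 * L') / w u) < (Real.exp (2 * L') + 1) * Fbar u :=
        (div_lt_iff₀ hFu).mp hu1
      have h4 : (Real.exp (2 * L') + 1) * Fbar u <
          (Real.exp (2 * L') + 1) * (Real.exp (2 * L') + 1)⁻¹ := by
        apply mul_lt_mul_of_pos_left hu2 (by positivity)
      rw [mul_inv_cancel₀ (by positivity)] at h4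
      linarith
    have hpos : 0 < u + -(2 * L') / w u := by
      by_contra hc
      push_neg at hc
      rw [hFone _ hc] at hnum
      linarith
    have h5 : 2 * L' / w u < u := by
      have : -(2 * L') / w u = -(2 * L' / w u) := by ring
      rw [this] at hpos; linarith
    have h6 : 2 * L' < u * w u := by
      have := (div_lt_iff₀ hwu).mp h5
      linarith [mul_comm u (w u)]
    have : L ≤ L' := le_max_left _ _
    linarith
  -- main part
  obtain ⟨b, hβb⟩ : ∃ b : ℕ, β ≤ (b : ℝ) := ⟨⌈β⌉₊, Nat.le_ceil β⟩
  obtain ⟨x, hxdef⟩ : ∃ x : ℝ, x = (b : ℝ) + 2 := ⟨_, rfl⟩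
  have hx0 : (0:ℝ) < x := by rw [hxdef]; positivity
  have h2e : (2:ℝ) ≤ Real.exp 1 := by
    have := Real.add_one_le_exp 1
    linarith
  obtain ⟨cA, hcA⟩ : ∃ cA : ℝ, cA = (1/2 : ℝ) ^ (b + 1) := ⟨_, rfl⟩
  have hcApos : 0 < cA := by rw [hcA]; positivity
  -- eventual inequalities
  have hlimA : Real.exp (-x) < cA := by
    have hxe : Real.exp x = Real.exp 1 ^ (b + 2) := by
      rw [← Real.exp_nat_mul, hxdef]
      norm_num
    have h1 : (2:ℝ) ^ (b + 2) ≤ Real.exp x := by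
      rw [hxe]
      exact pow_le_pow_left₀ (by norm_num) h2e _
    have h2 : Real.exp (-x) ≤ ((2:ℝ) ^ (b + 2))⁻¹ := by
      rw [Real.exp_neg]
      exact inv_anti₀ (by positivity) h1
    have h3 : ((2:ℝ) ^ (b + 2))⁻¹ < cA := by
      have hcA' : cA = ((2:ℝ) ^ (b + 1))⁻¹ := by
        rw [hcA, div_pow, one_pow, one_div]
      have hlt : ((2:ℝ)) ^ (b + 1) < 2 ^ (b + 2) := by
        apply pow_lt_pow_right₀ (by norm_num)
        omega
      rw [hcA']
      exact inv_strictAnti₀ (by positivity) hlt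
    linarith
  have hA : ∀ᶠ t in atTop, Fbar (t + x / w t) < cA * Fbar t := by
    have := (hGumbel x).eventually (eventually_lt_nhds hlimA)
    filter_upwards [this] with t ht
    exact (div_lt_iff₀ (hFpos t)).mp ht
  have hB1 : ∀ᶠ t in atTop,
      (9/10 : ℝ) * Real.exp (-1) * Fbar t < Fbar (t + 1 / w t) := by
    have hlt : (9/10 : ℝ) * Real.exp (-1) < Real.exp (-1) := by
      nlinarith [Real.exp_pos (-1 : ℝ)]
    have := (hGumbel 1).eventually (eventually_gt_nhds hlt)
    filter_upwards [this] with t ht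
    exact (lt_div_iff₀ (hFpos t)).mp ht
  have hB2 : ∀ᶠ t in atTop,
      (9/10 : ℝ) * Real.exp (-x) * Fbar t < Fbar (t + x / w t) := by
    have hlt : (9/10 : ℝ) * Real.exp (-x) < Real.exp (-x) := by
      nlinarith [Real.exp_pos (-x)]
    have := (hGumbel x).eventually (eventually_gt_nhds hlt)
    filter_upwards [this] with t ht
    exact (lt_div_iff₀ (hFpos t)).mp ht
  have hB3 : ∀ᶠ t in atTop,
      Fbar (t + (x + 2) / w t) < (11/10 : ℝ) * Real.exp (-(x + 2)) * Fbar t := by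
    have hlt : Real.exp (-(x + 2)) < (11/10 : ℝ) * Real.exp (-(x + 2)) := by
      nlinarith [Real.exp_pos (-(x + 2))]
    have := (hGumbel (x + 2)).eventually (eventually_lt_nhds hlt)
    filter_upwards [this] with t ht
    exact (div_lt_iff₀ (hFpos t)).mp ht
  obtain ⟨U, hU⟩ := eventually_atTop.mp
    ((hA.and (hB1.and (hB2.and hB3))).and (eventually_ge_atTop (1:ℝ)))
  have hU1 : ∀ t, U ≤ t → (1:ℝ) ≤ t := fun t ht => (hU t ht).2
  have hUpos : ∀ t, U ≤ t → (0:ℝ) < t := fun t ht => lt_of_lt_of_le one_pos (hU1 t ht)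
  -- self-neglecting property
  have hSN : ∀ t, U ≤ t → w t / 2 ≤ w (t + x / w t) := by
    intro t ht
    have hwt := hw t (hUpos t ht)
    have hstep : 0 ≤ x / w t := div_nonneg hx0.le hwt.le
    obtain ⟨s, hs⟩ : ∃ s, s = t + x / w t := ⟨_, rfl⟩
    rw [← hs]
    have hts : t ≤ s := by rw [hs]; linarith
    have hsU : U ≤ s := le_trans ht hts
    have hws := hw s (hUpos s hsU)
    by_contra hcon
    push_neg at hcon
    have hkey : t + (x + 2) / w t < s + 1 / w s := by
      have h21 : 2 / w t < 1 / w s := by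
        rw [div_lt_div_iff₀ hwt hws]
        nlinarith
      have hxp : (x + 2) / w t = x / w t + 2 / w t := by ring
      rw [hxp]
      linarith
    have e1 := (hU s hsU).1.2.1
    have e2 := (hU t ht).1.2.2.1
    have e3 := (hU t ht).1.2.2.2
    rw [← hs] at e2
    have emono : Fbar (s + 1 / w s) ≤ Fbar (t + (x + 2) / w t) := hFanti hkey.le
    have hFt := hFpos t
    have hc1 : (9/10 : ℝ) * Real.exp (-1) * ((9/10 : ℝ) * Real.exp (-x) * Fbar t) <
        (11/10 : ℝ) * Real.exp (-(x + 2)) * Fbar t := by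
      calc (9/10 : ℝ) * Real.exp (-1) * ((9/10 : ℝ) * Real.exp (-x) * Fbar t)
          < (9/10 : ℝ) * Real.exp (-1) * Fbar s := by
            apply mul_lt_mul_of_pos_left e2 (by positivity)
        _ < Fbar (s + 1 / w s) := e1
        _ ≤ Fbar (t + (x + 2) / w t) := emono
        _ < (11/10 : ℝ) * Real.exp (-(x + 2)) * Fbar t := e3
    have hexp : Real.exp (-(x + 2)) = Real.exp (-x) * (Real.exp (-1) * Real.exp (-1)) := by
      rw [← Real.exp_add, ← Real.exp_add]; ring_nf
    rw [hexp] at hc1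
    have hem : Real.exp (-1) ≤ 1/2 := by
      rw [Real.exp_neg]
      rw [inv_le_comm₀ (Real.exp_pos 1) (by norm_num)]
      linarith
    have hBpos : (0:ℝ) < Real.exp (-1) * (Real.exp (-x) * Fbar t) := by positivity
    have hint1 : Real.exp (-1) * (Real.exp (-1) * (Real.exp (-x) * Fbar t)) ≤
        (1/2) * (Real.exp (-1) * (Real.exp (-x) * Fbar t)) :=
      mul_le_mul_of_nonneg_right hem hBpos.le
    nlinarith [hc1, hint1, hBpos]
  -- final assembly
  have hC : Tendsto (fun u : ℝ => (2 * x / (m - 1)) ^ (b + 1) / (u * w u)) atTop (𝓝 0) :=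
    tendsto_const_nhds.div_atTop hUW
  apply squeeze_zero'
  · filter_upwards [hUW.eventually_ge_atTop 1, eventually_ge_atTop U] with u hS1 huU
    have hwu := hw u (hUpos u huU)
    apply mul_nonneg
    · exact Real.rpow_nonneg (by nlinarith) _
    · exact div_nonneg (hFpos _).le (hFpos _).le
  · filter_upwards [hUW.eventually_ge_atTop (max 1 (x / (m - 1))),
      eventually_ge_atTop U] with u hSS huU
    have hu1 : (1:ℝ) ≤ u := hU1 u huU
    have hwu := hw u (hUpos u huU)
    set S : ℝ := u * w u with hSdef
    have hS1 : (1:ℝ) ≤ S := le_trans (le_max_left _ _) hSS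
    have hS2 : x / (m - 1) ≤ S := le_trans (le_max_right _ _) hSS
    have hSpos : (0:ℝ) < S := lt_of_lt_of_le one_pos hS1
    have hm1 : (0:ℝ) < m - 1 := by linarith
    -- chain facts
    have hchain : ∀ k : ℕ, U ≤ gchain w x u k ∧ w u / 2 ^ k ≤ w (gchain w x u k) ∧
        gchain w x u k ≤ u + x * (2 ^ k - 1) / w u ∧
        Fbar (gchain w x u k) ≤ cA ^ k * Fbar u := by
      intro k
      induction k with
      | zero =>
        rw [gchain_zero]
        refine ⟨huU, by simp, by simp, by simp⟩
      | succ k ih =>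
        obtain ⟨hk1, hk2, hk3, hk4⟩ := ih
        have htpos : (0:ℝ) < gchain w x u k := hUpos _ hk1
        have hwt := hw _ htpos
        have hpw : (0:ℝ) < w u / 2 ^ k := by positivity
        have hstep : 0 ≤ x / w (gchain w x u k) := div_nonneg hx0.le hwt.le
        have hstep2 : x / w (gchain w x u k) ≤ x * 2 ^ k / w u := by
          have h1 : x / w (gchain w x u k) ≤ x / (w u / 2 ^ k) :=
            div_le_div_of_nonneg_left hx0.le hpw hk2
          have h2 : x / (w u / 2 ^ k) = x * 2 ^ k / w u := by
            field_simp
          linarith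
        refine ⟨?_, ?_, ?_, ?_⟩
        · rw [gchain_succ]; linarith
        · rw [gchain_succ]
          have hsn := hSN (gchain w x u k) hk1
          have h2 : w u / 2 ^ (k + 1) ≤ w (gchain w x u k) / 2 := by
            rw [pow_succ]
            rw [div_le_div_iff₀ (by positivity) (by norm_num)]
            have := (div_le_iff₀ (by positivity : (0:ℝ) < (2:ℝ)^k)).mp hk2
            nlinarith
          linarith
        · rw [gchain_succ]
          have heq : x * (2 ^ k - 1) / w u + x * 2 ^ k / w u
              = x * (2 ^ (k + 1) - 1) / w u := by
            rw [← add_div]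
            congr 1
            ring
          linarith
        · rw [gchain_succ]
          have hAe := (hU (gchain w x u k) hk1).1.1
          calc Fbar (gchain w x u k + x / w (gchain w x u k))
              ≤ cA * Fbar (gchain w x u k) := hAe.le
            _ ≤ cA * (cA ^ k * Fbar u) := by
                apply mul_le_mul_of_nonneg_left hk4 hcApos.le
            _ = cA ^ (k + 1) * Fbar u := by ring
    -- choose K
    set y : ℝ := (m - 1) * S / x with hy
    have hy1 : (1:ℝ) ≤ y := by
      rw [hy, le_div_iff₀ hx0, one_mul]
      have := (div_le_iff₀ hm1).mp hS2
      nlinarith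
    have hy0 : (0:ℝ) < y := lt_of_lt_of_le one_pos hy1
    obtain ⟨K, h2K, hyK⟩ : ∃ K : ℕ, (2:ℝ) ^ K ≤ y ∧ y < 2 * (2:ℝ) ^ K := by
      refine ⟨Nat.log 2 ⌊y⌋₊, ?_, ?_⟩
      · have h1 : 2 ^ Nat.log 2 ⌊y⌋₊ ≤ ⌊y⌋₊ := by
          apply Nat.pow_log_le_self 2
          have : 1 ≤ ⌊y⌋₊ := Nat.le_floor (by exact_mod_cast hy1)
          omega
        have h2 : ((2:ℕ) ^ Nat.log 2 ⌊y⌋₊ : ℝ) ≤ (⌊y⌋₊ : ℝ) := by exact_mod_cast h1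
        have h3 : ((⌊y⌋₊ : ℕ) : ℝ) ≤ y := Nat.floor_le hy0.le
        push_cast at h2
        linarith
      · have h1 : ⌊y⌋₊ < 2 ^ (Nat.log 2 ⌊y⌋₊ + 1) :=
          Nat.lt_pow_succ_log_self (by norm_num) _
        have h2 : ((⌊y⌋₊ : ℕ) : ℝ) + 1 ≤ ((2:ℕ) ^ (Nat.log 2 ⌊y⌋₊ + 1) : ℝ) := by
          exact_mod_cast h1
        have h3 : y < (⌊y⌋₊ : ℝ) + 1 := Nat.lt_floor_add_one y
        push_cast at h2
        rw [pow_succ] at h2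
        linarith [mul_comm ((2:ℝ) ^ Nat.log 2 ⌊y⌋₊) 2]
    -- chain fits in [u, m u]
    have hfit : gchain w x u K ≤ m * u := by
      have h1 := (hchain K).2.2.1
      have hxy : x * y = (m - 1) * S := by
        rw [hy]; field_simp
      have h2 : x * ((2:ℝ) ^ K - 1) ≤ (m - 1) * S := by
        nlinarith
      have h3 : x * (2 ^ K - 1) / w u ≤ (m - 1) * u := by
        rw [div_le_iff₀ hwu]
        calc x * ((2:ℝ) ^ K - 1) ≤ (m - 1) * S := h2
          _ = (m - 1) * u * w u := by rw [hSdef]; ring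
      linarith
    have hratio : Fbar (m * u) ≤ ((1/2 : ℝ) ^ K) ^ (b + 1) * Fbar u := by
      have h1 : Fbar (m * u) ≤ Fbar (gchain w x u K) := hFanti hfit
      have h2 := (hchain K).2.2.2
      have h3 : cA ^ K = ((1/2 : ℝ) ^ K) ^ (b + 1) := by
        rw [hcA, ← pow_mul, ← pow_mul, Nat.mul_comm]
      rw [h3] at h2
      linarith
    have hhalf : (1/2 : ℝ) ^ K ≤ 2 / y := by
      have h1 : (1/2 : ℝ) ^ K = 1 / 2 ^ K := by
        rw [div_pow, one_pow]
      rw [h1, div_le_div_iff₀ (by positivity) hy0]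
      nlinarith
    -- final computation
    have hterm : (u * w u) ^ β * (Fbar (m * u) / Fbar u)
        ≤ (2 * x / (m - 1)) ^ (b + 1) / (u * w u) := by
      have t1 : (u * w u) ^ β ≤ S ^ b := by
        rw [← hSdef]
        calc S ^ β ≤ S ^ ((b : ℕ) : ℝ) :=
              Real.rpow_le_rpow_of_exponent_le hS1 hβb
          _ = S ^ (b : ℕ) := Real.rpow_natCast S b
      have t2 : Fbar (m * u) / Fbar u ≤ ((1/2 : ℝ) ^ K) ^ (b + 1) := by
        rw [div_le_iff₀ (hFpos u)]
        linarith
      have t3 : ((1/2 : ℝ) ^ K) ^ (b + 1) ≤ (2 / y) ^ (b + 1) :=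
        pow_le_pow_left₀ (by positivity) hhalf _
      have t4 : (2 / y : ℝ) = (2 * x / (m - 1)) / S := by
        rw [hy]
        field_simp
      have t5 : S ^ b * ((2 * x / (m - 1)) / S) ^ (b + 1)
          = (2 * x / (m - 1)) ^ (b + 1) / S := by
        rw [div_pow, pow_succ S b]
        field_simp
      calc (u * w u) ^ β * (Fbar (m * u) / Fbar u)
          ≤ S ^ b * (Fbar (m * u) / Fbar u) := by
            apply mul_le_mul_of_nonneg_right t1
              (div_nonneg (hFpos _).le (hFpos _).le)
        _ ≤ S ^ b * ((2 / y) ^ (b + 1)) := by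
            apply mul_le_mul_of_nonneg_left (le_trans t2 t3) (by positivity)
        _ = S ^ b * ((2 * x / (m - 1)) / S) ^ (b + 1) := by rw [t4]
        _ = (2 * x / (m - 1)) ^ (b + 1) / S := t5
        _ = (2 * x / (m - 1)) ^ (b + 1) / (u * w u) := by rw [hSdef]
    exact hterm
  · exact hC
end

section
/- Let F be a distribution function on (0,∞) with infinite upper endpoint in the Gumbel max-domain of attraction with scaling function w. Then for any α > 0, ∫_u^∞ (x² − u²)^α dF(x) = (1+o(1)) · Γ(α+1) · (2/(u·w(u)))^α · u^{2α} · \bar F(u) as u → ∞. -/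
set_option maxHeartbeats 2000000

open MeasureTheory Filter Real Set

lemma aux_uw (F w : ℝ → ℝ)
    (hF1 : ∀ s ≤ (0:ℝ), F s = 1)
    (hFpos : ∀ u, 0 < F u)
    (hF0 : Tendsto F atTop (nhds 0))
    (hw : ∀ u > (0 : ℝ), 0 < w u)
    (hG : ∀ x : ℝ, Tendsto (fun u => F (u + x / w u) / F u) atTop (nhds (Real.exp (-x)))) :
    Tendsto (fun u => u * w u) atTop atTop := by
  rw [tendsto_atTop]
  by_contra hcon
  push_neg at hcon
  obtain ⟨b, hb⟩ := hcon
  set b' : ℝ := max b 1 with hb'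
  have hb'1 : (1:ℝ) ≤ b' := le_max_right _ _
  have hb'0 : (0:ℝ) < b' := lt_of_lt_of_le one_pos hb'1
  -- frequently u * w u < b'
  have hfreq : ∃ᶠ u in atTop, u * w u < b' := by
    exact hb.mono (fun u hu => lt_of_lt_of_le hu (le_max_left b 1))
  -- eventual facts
  have hev1 : ∀ᶠ u : ℝ in atTop, 0 < u := eventually_gt_atTop 0
  have hev2 : ∀ᶠ u : ℝ in atTop,
      F (u + (-(2*b')) / w u) / F u ≤ Real.exp (-(-(2*b'))) + 1 := by
    have := hG (-(2*b'))
    exact this.eventually (eventually_le_nhds (by linarith))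
  have hev3 : ∀ᶠ u : ℝ in atTop, F u < 1 / (Real.exp (2*b') + 2) := by
    apply hF0.eventually (eventually_lt_nhds (by positivity))
  obtain ⟨u, h1, h2, h3, h4⟩ := (hfreq.and_eventually (hev1.and (hev2.and hev3))).exists
  have hwu : 0 < w u := hw u h2
  -- u + (-(2b'))/w u ≤ 0
  have harg : u + (-(2*b')) / w u ≤ 0 := by
    have h5 : u / b' ≤ 1 / w u := by
      rw [div_le_div_iff₀ hb'0 hwu]
      nlinarith
    have : (2*b') / w u ≥ 2 * u := by
      have := mul_le_mul_of_nonneg_left h5 (le_of_lt (by linarith : (0:ℝ) < 2*b'))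
      calc 2 * u = (2*b') * (u / b') := by field_simp
        _ ≤ (2*b') * (1 / w u) := this
        _ = (2*b') / w u := by ring
    have : (-(2*b')) / w u ≤ -(2*u) := by
      rw [neg_div]; linarith
    linarith
  have hFone : F (u + (-(2*b')) / w u) = 1 := hF1 _ harg
  rw [hFone] at h3
  have hFu := hFpos u
  rw [neg_neg] at h3
  have h6 : 1 / F u ≤ Real.exp (2*b') + 1 := h3
  have h4' : F u * (Real.exp (2*b') + 2) < 1 :=
    (lt_div_iff₀ (by positivity)).mp h4
  have h3' : 1 ≤ (Real.exp (2*b') + 1) * F u := (div_le_iff₀ hFu).mp h3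
  nlinarith

lemma aux_wratio (F w : ℝ → ℝ)
    (hanti : Antitone F) (hFpos : ∀ u, 0 < F u)
    (hw : ∀ u > (0 : ℝ), 0 < w u)
    (hG : ∀ x : ℝ, Tendsto (fun u => F (u + x / w u) / F u) atTop (nhds (Real.exp (-x))))
    (δ : ℝ) (hδ0 : 0 < δ) (hδ1 : δ < 1) :
    ∀ᶠ v in atTop, (1 - δ) * w v ≤ w (v + 1 / w v) := by
  by_contra hcon
  rw [Filter.not_eventually] at hcon
  set η : ℝ := (Real.exp (-2 + δ) - Real.exp (-2)) / 4 with hη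
  have hexplt : Real.exp (-2) < Real.exp (-2 + δ) := Real.exp_lt_exp.mpr (by linarith)
  have hη0 : 0 < η := by rw [hη]; linarith
  -- eventual facts
  have hev1 : ∀ᶠ u : ℝ in atTop, 0 < u := eventually_gt_atTop 0
  have hev2 : ∀ᶠ v : ℝ in atTop, |F (v + 2 / w v) / F v - Real.exp (-2)| < η := by
    have := hG 2
    rw [Metric.tendsto_nhds] at this
    simpa [Real.dist_eq] using this η hη0
  have hev3 : ∀ᶠ v : ℝ in atTop,
      Real.exp (-1) - η < F (v + 1 / w v) / F v := by
    refine (hG 1).eventually (eventually_gt_nhds ?_)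
    rw [show (-1 : ℝ) = -(1:ℝ) by norm_num]
    linarith
  -- tendsto of v ↦ v + 1 / w v to atTop
  have hto : Tendsto (fun v : ℝ => v + 1 / w v) atTop atTop := by
    apply tendsto_atTop_mono' _ _ tendsto_id
    filter_upwards [hev1] with v hv
    have := hw v hv
    simp only [id]
    nlinarith [one_div_pos.mpr this]
  have hev4 : ∀ᶠ v : ℝ in atTop,
      Real.exp (-(1 - δ)) - η < F ((v + 1 / w v) + (1 - δ) / w (v + 1 / w v)) / F (v + 1 / w v) := by
    exact hto.eventually ((hG (1 - δ)).eventually (eventually_gt_nhds (by linarith)))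
  obtain ⟨v, hbad, hv0, h2, h1, h1δ⟩ :=
    (hcon.and_eventually (hev1.and (hev2.and (hev3.and hev4)))).exists
  push_neg at hbad
  set v' := v + 1 / w v with hv'
  have hwv : 0 < w v := hw v hv0
  have hv'0 : 0 < v' := by rw [hv']; have := one_div_pos.mpr hwv; linarith
  have hwv' : 0 < w v' := hw v' hv'0
  -- from hbad : w v' < (1-δ) w v, get 1 / w v < (1-δ) / w v'
  have hkey : 1 / w v ≤ (1 - δ) / w v' := by
    rw [div_le_div_iff₀ hwv hwv']
    nlinarith
  -- chain inequality
  have hmono : F (v' + (1 - δ) / w v') ≤ F (v' + 1 / w v) := hanti (by linarith)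
  have hFv := hFpos v
  have hFv' := hFpos v'
  have harg : v + 2 / w v = v' + 1 / w v := by rw [hv']; ring
  have hprod : F (v + 2 / w v) / F v
      ≥ (F (v' + (1 - δ) / w v') / F v') * (F v' / F v) := by
    rw [harg]
    rw [ge_iff_le, div_mul_div_comm, div_le_div_iff₀ (by positivity) (by positivity)]
    nlinarith [mul_le_mul_of_nonneg_right hmono (mul_pos hFv' hFv).le]
  -- numeric contradiction
  have e1 : Real.exp (-1) ≤ 1 := Real.exp_le_one_iff.mpr (by norm_num)
  have e2 : Real.exp (-(1 - δ)) ≤ 1 := Real.exp_le_one_iff.mpr (by linarith)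
  have epos1 : 0 < Real.exp (-1) - η := by
    have : Real.exp (-2 + δ) < Real.exp (-1) := Real.exp_lt_exp.mpr (by linarith)
    have h0 := Real.exp_pos (-2)
    have : η < Real.exp (-1) / 4 := by rw [hη]; linarith
    nlinarith [Real.exp_pos (-1)]
  have epos2 : 0 < Real.exp (-(1 - δ)) - η := by
    have : Real.exp (-2 + δ) ≤ Real.exp (-(1 - δ)) := Real.exp_le_exp.mpr (by linarith)
    have h0 := Real.exp_pos (-2)
    have : η ≤ Real.exp (-(1-δ)) / 4 := by rw [hη]; linarith
    nlinarith [Real.exp_pos (-(1-δ))]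
  have hmul : Real.exp (-1) * Real.exp (-(1 - δ)) = Real.exp (-2 + δ) := by
    rw [← Real.exp_add]; ring_nf
  have hlow : (Real.exp (-1) - η) * (Real.exp (-(1 - δ)) - η)
      ≤ F (v + 2 / w v) / F v := by
    calc (Real.exp (-1) - η) * (Real.exp (-(1 - δ)) - η)
        ≤ (F v' / F v) * (F (v' + (1 - δ) / w v') / F v') := by
          apply mul_le_mul (le_of_lt h1) (le_of_lt h1δ) (le_of_lt epos2) (by positivity)
      _ = (F (v' + (1 - δ) / w v') / F v') * (F v' / F v) := by ring
      _ ≤ F (v + 2 / w v) / F v := hprod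
  have hup : F (v + 2 / w v) / F v < Real.exp (-2) + η := by
    have := abs_lt.mp h2
    linarith [this.2]
  nlinarith

private noncomputable def chainFn (w : ℝ → ℝ) (u : ℝ) : ℕ → ℝ
  | 0 => u
  | n+1 => chainFn w u n + 1 / w (chainFn w u n)

lemma aux_potter (F w : ℝ → ℝ)
    (hanti : Antitone F) (hFpos : ∀ u, 0 < F u)
    (hw : ∀ u > (0 : ℝ), 0 < w u)
    (hG : ∀ x : ℝ, Tendsto (fun u => F (u + x / w u) / F u) atTop (nhds (Real.exp (-x))))
    (K : ℝ) (hK : 0 < K) :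
    ∃ C : ℝ, 1 ≤ C ∧ ∃ u₀ : ℝ, ∀ u ≥ u₀, ∀ x ≥ (0:ℝ),
      F (u + x / w u) ≤ C * (1 + x) ^ (-K) * F u := by
  set ε : ℝ := 1 / (8 * (K + 1)) with hε
  have hε0 : 0 < ε := by rw [hε]; positivity
  have hε12 : ε ≤ 1/2 := by
    rw [hε, div_le_div_iff₀ (by positivity) two_pos]
    linarith
  set β : ℝ := 1 - ε with hβ
  have hβ0 : 0 < β := by rw [hβ]; linarith
  have hβ1 : β < 1 := by rw [hβ]; linarith
  set B : ℝ := β⁻¹ with hB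
  have hB1 : 1 < B := by rw [hB]; exact (one_lt_inv₀ hβ0).mpr hβ1
  set q : ℝ := Real.exp (-(1/2)) with hq
  have hq0 : 0 < q := Real.exp_pos _
  -- thresholds
  obtain ⟨a₁, ha₁⟩ := eventually_atTop.mp
    (aux_wratio F w hanti hFpos hw hG ε hε0 (by linarith))
  have hgum : ∀ᶠ v : ℝ in atTop, F (v + 1 / w v) / F v ≤ q := by
    refine (hG 1).eventually (eventually_le_nhds ?_)
    rw [hq]
    exact Real.exp_lt_exp.mpr (by norm_num)
  obtain ⟨a₂, ha₂⟩ := eventually_atTop.mp hgum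
  refine ⟨Real.exp (1/2) * ε ^ (-K), ?_, max (max a₁ a₂) 1, ?_⟩
  · have h1 : (1:ℝ) ≤ Real.exp (1/2) := Real.one_le_exp (by norm_num)
    have h2 : (1:ℝ) ≤ ε ^ (-K) := by
      calc (1:ℝ) = ε ^ (0:ℝ) := (Real.rpow_zero ε).symm
        _ ≤ ε ^ (-K) := Real.rpow_le_rpow_of_exponent_ge hε0 (by linarith) (by linarith)
    nlinarith
  intro u hu x hx
  have hu1 : (1:ℝ) ≤ u := le_trans (le_max_right _ _) hu
  have hua₁ : a₁ ≤ u := le_trans (le_trans (le_max_left _ _) (le_max_left _ _)) hu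
  have hua₂ : a₂ ≤ u := le_trans (le_trans (le_max_right _ _) (le_max_left _ _)) hu
  -- the chain
  set c : ℕ → ℝ := chainFn w u with hc
  have hc0 : c 0 = u := rfl
  have hcs : ∀ n, c (n + 1) = c n + 1 / w (c n) := fun n => rfl
  have main : ∀ n : ℕ, u ≤ c n ∧ β ^ n * w u ≤ w (c n) ∧ F (c n) ≤ q ^ n * F u ∧
      c n ≤ u + (∑ k ∈ Finset.range n, B ^ k) / w u := by
    intro n
    induction n with
    | zero =>
      refine ⟨le_of_eq hc0.symm, ?_, ?_, ?_⟩
      · rw [hc0, pow_zero, one_mul]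
      · rw [hc0, pow_zero, one_mul]
      · rw [hc0, Finset.range_zero, Finset.sum_empty, zero_div, add_zero]
    | succ n ih =>
      obtain ⟨h1, h2, h3, h4⟩ := ih
      have hcn0 : 0 < c n := lt_of_lt_of_le (by linarith) h1
      have hwcn : 0 < w (c n) := hw _ hcn0
      have hwu : 0 < w u := hw u (by linarith)
      have step1 : u ≤ c (n+1) := by
        rw [hcs]
        have := one_div_pos.mpr hwcn
        linarith
      have step2 : β ^ (n+1) * w u ≤ w (c (n+1)) := by
        rw [hcs]
        have := ha₁ (c n) (le_trans hua₁ h1)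
        calc β ^ (n+1) * w u = β * (β ^ n * w u) := by ring
          _ ≤ β * w (c n) := by nlinarith
          _ ≤ w (c n + 1 / w (c n)) := by rw [hβ] at *; exact this
      have step3 : F (c (n+1)) ≤ q ^ (n+1) * F u := by
        rw [hcs]
        have hr := ha₂ (c n) (le_trans hua₂ h1)
        have : F (c n + 1 / w (c n)) ≤ q * F (c n) :=
          (div_le_iff₀ (hFpos (c n))).mp hr
        calc F (c n + 1 / w (c n)) ≤ q * F (c n) := this
          _ ≤ q * (q ^ n * F u) := by nlinarith
          _ = q ^ (n+1) * F u := by ring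
      have step4 : c (n+1) ≤ u + (∑ k ∈ Finset.range (n+1), B ^ k) / w u := by
        rw [hcs, Finset.sum_range_succ]
        have hβn : 0 < β ^ n * w u := by positivity
        have : 1 / w (c n) ≤ B ^ n / w u := by
          rw [div_le_div_iff₀ hwcn hwu, hB]
          calc 1 * w u = (β ^ n)⁻¹ * (β ^ n * w u) := by field_simp
            _ ≤ (β ^ n)⁻¹ * w (c n) := by
                have : (0:ℝ) ≤ (β ^ n)⁻¹ := by positivity
                nlinarith
            _ = (β⁻¹) ^ n * w (c n) := by rw [← inv_pow]
        rw [add_div]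
        linarith
      exact ⟨step1, step2, step3, step4⟩
  -- choose n
  have hwu : 0 < w u := hw u (by linarith)
  set L : ℝ := Real.log B with hL
  have hL0 : 0 < L := Real.log_pos hB1
  have hlog0 : 0 ≤ Real.log (1 + ε * x) := Real.log_nonneg (by nlinarith)
  set n : ℕ := ⌊Real.log (1 + ε * x) / L⌋₊ with hn
  have hn1 : (n : ℝ) ≤ Real.log (1 + ε * x) / L := Nat.floor_le (by positivity)
  have hn2 : Real.log (1 + ε * x) / L < n + 1 := Nat.lt_floor_add_one _
  have hx1 : (0:ℝ) < 1 + ε * x := by nlinarith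
  have hBn : B ^ n ≤ 1 + ε * x := by
    have hBeL : B = Real.exp L := (Real.exp_log (by linarith)).symm
    rw [hBeL, ← Real.exp_nat_mul]
    rw [← Real.exp_log hx1]
    apply Real.exp_le_exp.mpr
    rw [le_div_iff₀ hL0] at hn1
    nlinarith
  -- sum bound
  have hsum : (∑ k ∈ Finset.range n, B ^ k) ≤ x := by
    have hBne : B ≠ 1 := ne_of_gt hB1
    rw [geom_sum_eq hBne]
    have hBm1 : B - 1 = ε / β := by
      rw [hB, hβ]; field_simp; rw [div_sub_one (ne_of_gt (by linarith))]; ring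
    rw [hBm1, div_div_eq_mul_div, div_le_iff₀ (by positivity)]
    have h1 : B ^ n - 1 ≤ ε * x := by linarith
    have h2 : (1:ℝ) ≤ B ^ n := one_le_pow₀ hB1.le
    nlinarith
  -- conclude position
  have hreach : c n ≤ u + x / w u := by
    have := (main n).2.2.2
    have hdiv : (∑ k ∈ Finset.range n, B ^ k) / w u ≤ x / w u := by gcongr
    linarith
  have hF1 : F (u + x / w u) ≤ q ^ n * F u := le_trans (hanti hreach) (main n).2.2.1
  -- bound q ^ n
  have hL2ε : L ≤ 2 * ε := by
    have := Real.log_le_sub_one_of_pos (show (0:ℝ) < B by linarith)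
    have hBv : B - 1 = ε / β := by rw [hB, hβ]; field_simp; rw [div_sub_one (ne_of_gt (by linarith))]; ring
    rw [hL]
    calc Real.log B ≤ B - 1 := this
      _ = ε / β := hBv
      _ ≤ 2 * ε := by
          rw [div_le_iff₀ hβ0, hβ]
          nlinarith
  have hnlow : Real.log (1 + ε * x) / (2*ε) - 1 ≤ (n:ℝ) := by
    have h1 : Real.log (1 + ε * x) < ((n:ℝ) + 1) * L := by
      rw [div_lt_iff₀ hL0] at hn2; linarith
    have h2 : ((n:ℝ)+1) * L ≤ ((n:ℝ)+1) * (2*ε) := by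
      apply mul_le_mul_of_nonneg_left hL2ε (by positivity)
    rw [div_sub_one (by positivity), div_le_iff₀ (by positivity)]
    nlinarith
  have hqn : q ^ n ≤ Real.exp (1/2) * (1 + ε * x) ^ (-(1/(4*ε))) := by
    rw [hq, ← Real.exp_nat_mul]
    rw [Real.rpow_def_of_pos hx1, ← Real.exp_add]
    apply Real.exp_le_exp.mpr
    have : Real.log (1 + ε*x) / (4*ε) ≤ ((n:ℝ)/2 + 1/2) := by
      have := hnlow
      have h4 : Real.log (1 + ε * x) / (4*ε) = (Real.log (1 + ε * x) / (2*ε))/2 := by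
        ring
      rw [h4]
      linarith
    have hrw : Real.log (1 + ε * x) * (-(1/(4*ε))) = -(Real.log (1 + ε*x) / (4*ε)) := by
      ring
    rw [hrw]
    linarith
  have hpow1 : (1 + ε * x) ^ (-(1/(4*ε))) ≤ (1 + ε * x) ^ (-K) := by
    apply Real.rpow_le_rpow_of_exponent_le (by nlinarith)
    have h14 : 1/(4*ε) = 2*(K+1) := by
      rw [hε]; field_simp; ring
    have : K ≤ 1/(4*ε) := by rw [h14]; linarith
    linarith
  have hpow2 : (1 + ε * x) ^ (-K) ≤ ε ^ (-K) * (1 + x) ^ (-K) := by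
    have h1 : ε * (1 + x) ≤ 1 + ε * x := by nlinarith
    have h2 : (0:ℝ) < ε * (1 + x) := by nlinarith
    calc (1 + ε * x) ^ (-K) ≤ (ε * (1+x)) ^ (-K) :=
          Real.rpow_le_rpow_of_nonpos h2 h1 (by linarith)
      _ = ε ^ (-K) * (1 + x) ^ (-K) := Real.mul_rpow (le_of_lt hε0) (by linarith)
  -- combine
  have hFu0 : 0 ≤ F u := le_of_lt (hFpos u)
  calc F (u + x / w u) ≤ q ^ n * F u := hF1
    _ ≤ (Real.exp (1/2) * (ε ^ (-K) * (1+x) ^ (-K))) * F u := by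
        apply mul_le_mul_of_nonneg_right _ hFu0
        calc q ^ n ≤ Real.exp (1/2) * (1 + ε * x) ^ (-(1/(4*ε))) := hqn
          _ ≤ Real.exp (1/2) * (1 + ε * x) ^ (-K) := by
              nlinarith [Real.exp_pos (1/2:ℝ)]
          _ ≤ Real.exp (1/2) * (ε ^ (-K) * (1+x) ^ (-K)) := by
              nlinarith [Real.exp_pos (1/2:ℝ)]
    _ = Real.exp (1/2) * ε ^ (-K) * (1+x) ^ (-K) * F u := by ring

lemma aux_dct (F w : ℝ → ℝ)
    (hanti : Antitone F) (hFpos : ∀ u, 0 < F u)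
    (hF1 : ∀ s ≤ (0:ℝ), F s = 1)
    (hF0 : Tendsto F atTop (nhds 0))
    (hw : ∀ u > (0 : ℝ), 0 < w u)
    (hG : ∀ x : ℝ, Tendsto (fun u => F (u + x / w u) / F u) atTop (nhds (Real.exp (-x))))
    (α : ℝ) (hα : 0 < α) :
    Tendsto (fun u => ∫ y in Ioi (0:ℝ),
        (α * y ^ (α - 1)) * (F (Real.sqrt (u^2 + (2*u/w u)*y)) / F u))
      atTop (nhds (Real.Gamma (α + 1))) := by
  have huw : Tendsto (fun u => u * w u) atTop atTop := aux_uw F w hF1 hFpos hF0 hw hG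
  set K : ℝ := 2*α + 4 with hK
  have hK0 : 0 < K := by rw [hK]; linarith
  obtain ⟨C, hC1, u₀, hpott⟩ := aux_potter F w hanti hFpos hw hG K hK0
  have hC0 : 0 < C := lt_of_lt_of_le one_pos hC1
  set A : ℝ := α * C * 2 ^ (K : ℝ) with hA
  have h2K : (1:ℝ) ≤ 2 ^ (K:ℝ) := Real.one_le_rpow one_le_two hK0.le
  have hA0 : 0 < A := by
    rw [hA]; positivity
  have hFmeas : Measurable F := hanti.measurable
  -- the value of the limit integral
  have hval : ∫ y in Ioi (0:ℝ), (α * y ^ (α - 1)) * Real.exp (-y) = Real.Gamma (α + 1) := by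
    rw [Real.Gamma_add_one (ne_of_gt hα), Real.Gamma_eq_integral hα]
    rw [← integral_const_mul]
    apply setIntegral_congr_fun measurableSet_Ioi
    intro y _
    ring
  rw [← hval]
  -- dominated convergence
  apply tendsto_integral_filter_of_dominated_convergence
    (bound := fun y => A * min (y ^ (α - 1)) (y ^ (α - 1 - K/2)))
  · -- measurability
    filter_upwards [eventually_gt_atTop 0] with u hu
    apply AEStronglyMeasurable.mul
    · exact ((by measurability : Measurable fun y : ℝ => α * y ^ (α - 1))).aestronglyMeasurable
    · apply Measurable.aestronglyMeasurable
      apply Measurable.div_const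
      apply hFmeas.comp
      apply Measurable.sqrt
      exact measurable_const.add (measurable_const.mul measurable_id)
  · -- bound
    filter_upwards [eventually_ge_atTop u₀, eventually_gt_atTop 0,
        huw.eventually_ge_atTop 1] with u hu₀ hu0 huw1
    rw [ae_restrict_iff' measurableSet_Ioi]
    apply ae_of_all
    intro y hy
    rw [mem_Ioi] at hy
    have hwu : 0 < w u := hw u hu0
    set c : ℝ := 2*u/w u with hc
    have hc0 : 0 < c := by rw [hc]; positivity
    set s : ℝ := Real.sqrt (u^2 + c*y) with hs
    have hcy0 : 0 < c * y := mul_pos hc0 hy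
    have hsu : u ≤ s := by
      rw [hs]
      calc u = Real.sqrt (u^2) := by rw [Real.sqrt_sq hu0.le]
        _ ≤ _ := Real.sqrt_le_sqrt (by linarith)
    have hs0 : 0 < s := lt_of_lt_of_le hu0 hsu
    set x₀ : ℝ := w u * (s - u) with hx₀
    have hx₀0 : 0 ≤ x₀ := by rw [hx₀]; nlinarith
    have harg : u + x₀ / w u = s := by rw [hx₀]; field_simp; ring
    -- lower bound on x₀ : x₀ ≥ y / (1 + √y)
    have hsqy : 0 ≤ Real.sqrt y := Real.sqrt_nonneg y
    have hx₀low : y / (1 + Real.sqrt y) ≤ x₀ := by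
      -- s ≤ u + u * (2 * √y)  (since √(cy) ≤ 2u√y using u w u ≥ 1)
      have hcy_le : c * y ≤ (2*u*Real.sqrt y)^2 := by
        have h1 : c * y = 2 * u * y / w u := by rw [hc]; ring
        have h2 : (2*u*Real.sqrt y)^2 = 4*u^2*y := by
          rw [mul_pow, mul_pow, Real.sq_sqrt hy.le]; ring
        rw [h1, h2, div_le_iff₀ hwu]
        nlinarith
      have hsle : s ≤ u + 2*u*Real.sqrt y := by
        rw [hs]
        have h3 : u^2 + c*y ≤ (u + 2*u*Real.sqrt y)^2 := by nlinarith
        calc Real.sqrt (u^2 + c*y) ≤ Real.sqrt ((u + 2*u*Real.sqrt y)^2) :=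
              Real.sqrt_le_sqrt h3
          _ = u + 2*u*Real.sqrt y := Real.sqrt_sq (by positivity)
      -- x₀ = w u * (s - u) = w u * c * y / (s + u) = 2 u y / (s + u)
      have hx₀eq : x₀ * (s + u) = 2 * u * y := by
        have hss : s^2 = u^2 + c*y := Real.sq_sqrt (by nlinarith)
        have : (s - u) * (s + u) = c * y := by nlinarith
        have hwc : w u * c = 2 * u := by rw [hc]; field_simp
        calc x₀ * (s + u) = w u * ((s - u) * (s + u)) := by rw [hx₀]; ring
          _ = w u * (c * y) := by rw [this]
          _ = 2 * u * y := by rw [← mul_assoc, hwc]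
      rw [div_le_iff₀ (by positivity)]
      have hsum : s + u ≤ 2*u*(1 + Real.sqrt y) := by nlinarith
      nlinarith [mul_le_mul_of_nonneg_left hsum hx₀0]
    -- Potter bound
    have hpb := hpott u hu₀ x₀ hx₀0
    rw [harg] at hpb
    have hFu := hFpos u
    have hFs := hFpos s
    have hgle : F s / F u ≤ C * (1 + x₀) ^ (-K) := by
      rw [div_le_iff₀ hFu]
      calc F s ≤ C * (1+x₀)^(-K) * F u := hpb
        _ = C * (1+x₀)^(-K) * F u := rfl
    have hbase : (1 + x₀) ^ (-K) ≤ (1 + y/(1+Real.sqrt y)) ^ (-K) := by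
      apply Real.rpow_le_rpow_of_nonpos (by positivity) (by linarith) (by linarith)
    -- positivity of integrand pieces
    have hyα : 0 ≤ y ^ (α - 1) := Real.rpow_nonneg hy.le _
    have hint_nonneg : 0 ≤ (α * y ^ (α - 1)) * (F s / F u) := by positivity
    rw [Real.norm_eq_abs, abs_of_nonneg hint_nonneg]
    have hgle2 : F s / F u ≤ C * (1 + y/(1+Real.sqrt y)) ^ (-K) :=
      le_trans hgle (mul_le_mul_of_nonneg_left hbase hC0.le)
    have hchain : (α * y ^ (α - 1)) * (F s / F u)
        ≤ (α * y ^ (α-1)) * (C * (1 + y/(1+Real.sqrt y)) ^ (-K)) :=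
      mul_le_mul_of_nonneg_left hgle2 (by positivity)
    apply le_trans hchain
    rcases le_or_gt y 1 with hy1 | hy1
    · -- small y : bound by A * y^(α-1), and min = y^(α-1)
      have hmin : min (y ^ (α - 1)) (y ^ (α - 1 - K/2)) = y ^ (α-1) := by
        apply min_eq_left
        apply Real.rpow_le_rpow_of_exponent_ge hy hy1
        linarith
      rw [hmin]
      have hple : (1 + y/(1+Real.sqrt y)) ^ (-K) ≤ 1 := by
        apply Real.rpow_le_one_of_one_le_of_nonpos
          (le_add_of_nonneg_right (by positivity)) (by linarith)
      calc (α * y ^ (α-1)) * (C * (1 + y/(1+Real.sqrt y)) ^ (-K))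
          ≤ (α * y ^ (α-1)) * (C * 1) := by
            refine mul_le_mul_of_nonneg_left ?_ (by positivity)
            nlinarith
        _ = (α * C) * y ^ (α-1) := by ring
        _ ≤ A * y ^ (α-1) := by
            refine mul_le_mul_of_nonneg_right ?_ hyα
            rw [hA]
            nlinarith
    · -- large y : bound by A * y^(α-1-K/2)
      have hsy1 : 1 ≤ Real.sqrt y := by
        rw [show (1:ℝ) = Real.sqrt 1 by rw [Real.sqrt_one]]
        exact Real.sqrt_le_sqrt hy1.le
      have hmin : min (y ^ (α - 1)) (y ^ (α - 1 - K/2)) = y ^ (α-1-K/2) := by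
        apply min_eq_right
        apply Real.rpow_le_rpow_of_exponent_le (by linarith)
        linarith
      rw [hmin]
      -- y/(1+√y) ≥ √y/2
      have hge : Real.sqrt y / 2 ≤ y / (1 + Real.sqrt y) := by
        rw [div_le_div_iff₀ two_pos (by positivity)]
        have hyy : Real.sqrt y * Real.sqrt y = y := Real.mul_self_sqrt hy.le
        nlinarith
      have hb1 : (1 + y/(1+Real.sqrt y)) ^ (-K) ≤ (Real.sqrt y / 2) ^ (-K) := by
        apply Real.rpow_le_rpow_of_nonpos (by positivity) (by linarith) (by linarith)
      have h2inv : ((2:ℝ)⁻¹) ^ (-K) = 2 ^ (K:ℝ) := by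
        rw [Real.inv_rpow (by norm_num : (0:ℝ) ≤ 2), ← Real.rpow_neg (by norm_num : (0:ℝ) ≤ 2),
          neg_neg]
      have hb2 : (Real.sqrt y / 2) ^ (-K) = 2^(K:ℝ) * (Real.sqrt y) ^ (-K) := by
        rw [div_eq_mul_inv, Real.mul_rpow hsqy (by norm_num), h2inv]
        ring
      have hb3 : (Real.sqrt y) ^ (-K) = y ^ (-(K/2)) := by
        rw [Real.sqrt_eq_rpow, ← Real.rpow_mul hy.le]
        congr 1
        ring
      have hb4 : y ^ (α-1) * y ^ (-(K/2)) = y ^ (α-1-K/2) := by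
        rw [← Real.rpow_add hy]
        ring_nf
      calc (α * y ^ (α-1)) * (C * (1 + y/(1+Real.sqrt y)) ^ (-K))
          ≤ (α * y ^ (α-1)) * (C * (Real.sqrt y / 2) ^ (-K)) := by
            refine mul_le_mul_of_nonneg_left ?_ (by positivity)
            nlinarith
        _ = A * (y ^ (α-1) * y ^ (-(K/2))) := by rw [hb2, hb3, hA]; ring
        _ = A * y ^ (α-1-K/2) := by rw [hb4]
  · -- integrability of the bound
    apply Integrable.const_mul
    have hsplit : Ioc (0:ℝ) 1 ∪ Ioi (1:ℝ) = Ioi 0 := Ioc_union_Ioi_eq_Ioi zero_le_one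
    have hmeas : Measurable fun y : ℝ => min (y ^ (α - 1)) (y ^ (α - 1 - K/2)) := by
      apply Measurable.min <;> measurability
    rw [← IntegrableOn, ← hsplit]
    apply IntegrableOn.union
    · -- on Ioc 0 1
      have hmaj : IntegrableOn (fun y : ℝ => y ^ (α - 1)) (Ioc 0 1) := by
        have h := intervalIntegral.intervalIntegrable_rpow' (a := 0) (b := 1)
          (show (-1:ℝ) < α - 1 by linarith)
        rw [intervalIntegrable_iff, uIoc_of_le zero_le_one] at h
        exact h
      apply Integrable.mono' hmaj hmeas.aestronglyMeasurable
      rw [ae_restrict_iff' measurableSet_Ioc]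
      apply ae_of_all
      intro y hy
      have hy0 : 0 < y := hy.1
      have h1 : 0 ≤ min (y ^ (α - 1)) (y ^ (α - 1 - K/2)) :=
        le_min (Real.rpow_nonneg hy0.le _) (Real.rpow_nonneg hy0.le _)
      rw [Real.norm_eq_abs, abs_of_nonneg h1]
      exact min_le_left _ _
    · -- on Ioi 1
      have hmaj : IntegrableOn (fun y : ℝ => y ^ (α - 1 - K/2)) (Ioi 1) := by
        apply integrableOn_Ioi_rpow_of_lt _ one_pos
        rw [hK]; linarith
      apply Integrable.mono' hmaj hmeas.aestronglyMeasurable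
      rw [ae_restrict_iff' measurableSet_Ioi]
      apply ae_of_all
      intro y hy
      rw [mem_Ioi] at hy
      have hy0 : (0:ℝ) < y := lt_trans one_pos hy
      have h1 : 0 ≤ min (y ^ (α - 1)) (y ^ (α - 1 - K/2)) :=
        le_min (Real.rpow_nonneg hy0.le _) (Real.rpow_nonneg hy0.le _)
      rw [Real.norm_eq_abs, abs_of_nonneg h1]
      exact min_le_right _ _
  · -- pointwise limit
    rw [ae_restrict_iff' measurableSet_Ioi]
    apply ae_of_all
    intro y hy
    rw [mem_Ioi] at hy
    apply Tendsto.const_mul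
    rw [tendsto_order]
    constructor
    · -- lower bound
      intro b hb
      filter_upwards [(hG y).eventually (eventually_gt_nhds hb), eventually_gt_atTop 0]
        with u h1 h2
      have hwu : 0 < w u := hw u h2
      have hFu := hFpos u
      have hsle : Real.sqrt (u^2 + (2*u/w u)*y) ≤ u + y / w u := by
        have he : (2*u/w u)*y = 2*u*(y/w u) := by ring
        have h3 : u^2 + (2*u/w u)*y ≤ (u + y/w u)^2 := by
          rw [he]; nlinarith [sq_nonneg (y / w u)]
        calc Real.sqrt (u^2 + (2*u/w u)*y) ≤ Real.sqrt ((u + y/w u)^2) :=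
              Real.sqrt_le_sqrt h3
          _ = u + y/w u := Real.sqrt_sq (by positivity)
      have hFle : F (u + y / w u) ≤ F (Real.sqrt (u^2 + (2*u/w u)*y)) := hanti hsle
      calc b < F (u + y / w u) / F u := h1
        _ ≤ F (Real.sqrt (u^2 + (2*u/w u)*y)) / F u := by gcongr
    · -- upper bound
      intro b hb
      -- choose s < 1 with exp (-(s*y)) < b
      have hcont : Tendsto (fun s : ℝ => Real.exp (-(s*y))) (nhdsWithin 1 (Iio 1))
          (nhds (Real.exp (-y))) := by
        have : Tendsto (fun s : ℝ => Real.exp (-(s*y))) (nhds 1) (nhds (Real.exp (-(1*y)))) := by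
          apply (Continuous.tendsto (by continuity) 1)
        rw [one_mul] at this
        exact this.mono_left nhdsWithin_le_nhds
      have hev : ∀ᶠ s in nhdsWithin (1:ℝ) (Iio 1), Real.exp (-(s*y)) < b :=
        hcont.eventually (eventually_lt_nhds hb)
      have hev2 : ∀ᶠ s in nhdsWithin (1:ℝ) (Iio 1), s ∈ Ioo (0:ℝ) 1 :=
        Filter.eventually_mem_set.mpr (Ioo_mem_nhdsLT (by norm_num : (0:ℝ) < 1))
      obtain ⟨s, hsb, hs01⟩ := (hev.and hev2).exists
      obtain ⟨hs0, hs1⟩ := hs01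
      filter_upwards [(hG (s*y)).eventually (eventually_lt_nhds hsb),
        huw.eventually_ge_atTop (y / (1 - s)), eventually_gt_atTop 0] with u h1 h2 h3
      have hwu : 0 < w u := hw u h3
      have hFu := hFpos u
      have hsge : u + (s*y) / w u ≤ Real.sqrt (u^2 + (2*u/w u)*y) := by
        have hkey : (u + (s*y)/w u)^2 ≤ u^2 + (2*u/w u)*y := by
          set t : ℝ := (w u)⁻¹ with htdef
          have ht : 0 < t := inv_pos.mpr hwu
          have hid : w u * t = 1 := mul_inv_cancel₀ (ne_of_gt hwu)
          have he1 : (u + (s*y)/w u)^2 = u^2 + 2*u*s*y*t + (s*y*t)^2 := by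
            rw [div_eq_mul_inv, ← htdef]; ring
          have he2 : (2*u/w u)*y = 2*u*y*t := by
            rw [div_eq_mul_inv, ← htdef]; ring
          rw [he1, he2]
          have hm : y / (1-s) ≤ u * w u := h2
          have h4 : y ≤ u * w u * (1 - s) := by
            rw [div_le_iff₀ (by linarith)] at hm; linarith
          have hyt : y * t ≤ u * (1 - s) := by
            calc y * t ≤ (u * w u * (1-s)) * t := mul_le_mul_of_nonneg_right h4 ht.le
              _ = u * (1-s) * (w u * t) := by ring
              _ = u * (1-s) := by rw [hid, mul_one]
          have hyt0 : 0 ≤ y * t := by positivity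
          have hs2 : s^2 ≤ 1 := by nlinarith
          have e1 : (s*y*t)^2 ≤ (y*t)*(y*t) := by
            calc (s*y*t)^2 = s^2*(y*t)^2 := by ring
              _ ≤ 1*(y*t)^2 := mul_le_mul_of_nonneg_right hs2 (sq_nonneg _)
              _ = (y*t)*(y*t) := by ring
          have e2 : (y*t)*(y*t) ≤ (u*(1-s))*(y*t) := mul_le_mul_of_nonneg_right hyt hyt0
          have e4 : (s*y*t)^2 ≤ u*(1-s)*(y*t) := by linarith [e1, e2]
          have e5 : 0 ≤ u*(1-s)*(y*t) := by
            apply mul_nonneg (mul_nonneg h3.le (by linarith)) hyt0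
          linarith
        calc u + (s*y)/w u = Real.sqrt ((u + (s*y)/w u)^2) := (Real.sqrt_sq (by positivity)).symm
          _ ≤ _ := Real.sqrt_le_sqrt hkey
      have hFle : F (Real.sqrt (u^2 + (2*u/w u)*y)) ≤ F (u + (s*y) / w u) := hanti hsge
      calc F (Real.sqrt (u^2 + (2*u/w u)*y)) / F u ≤ F (u + (s*y) / w u) / F u := by
            gcongr
        _ < b := h1

lemma aux_identity (μ : Measure ℝ) [IsProbabilityMeasure μ]
    (α : ℝ) (hα : 0 < α) (u : ℝ) (hu : 0 < u) (c : ℝ) (hc : 0 < c) :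
    ∫ x in Ioi u, (x^2 - u^2)^α ∂μ
      = c^α * ∫ y in Ioi (0:ℝ),
          (α * y^(α-1)) * (μ (Ioi (Real.sqrt (u^2 + c*y)))).toReal := by
  have hFne : ∀ s : ℝ, μ (Ioi s) ≠ ⊤ := fun s => measure_ne_top μ _
  set f : ℝ → ℝ := fun x => (x^2 - u^2)^α with hf
  have hfmeas : Measurable f := by
    have h1 : Measurable fun x : ℝ => x^2 - u^2 :=
      ((continuous_pow 2).sub continuous_const).measurable
    have h2 : Measurable fun z : ℝ => z ^ α := by measurability
    exact h2.comp h1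
  have hnn : 0 ≤ᵐ[μ.restrict (Ioi u)] f := by
    rw [EventuallyLE, ae_restrict_iff' measurableSet_Ioi]
    apply ae_of_all
    intro x hx
    rw [mem_Ioi] at hx
    apply Real.rpow_nonneg
    nlinarith
  -- step A: layer cake
  have stepA : ∫ x in Ioi u, f x ∂μ
      = ∫ t in Ioi (0:ℝ), (μ (Ioi (Real.sqrt (u^2 + t^(1/α))))).toReal := by
    rw [integral_eq_lintegral_of_nonneg_ae hnn hfmeas.aestronglyMeasurable]
    rw [lintegral_eq_lintegral_meas_lt _ hnn hfmeas.aemeasurable]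
    have hset : ∀ t ∈ Ioi (0:ℝ),
        (μ.restrict (Ioi u)) {a | t < f a} = μ (Ioi (Real.sqrt (u^2 + t^(1/α)))) := by
      intro t ht
      rw [mem_Ioi] at ht
      rw [Measure.restrict_apply (measurableSet_lt measurable_const hfmeas)]
      congr 1
      ext x
      simp only [mem_inter_iff, mem_setOf_eq, mem_Ioi]
      constructor
      · rintro ⟨htf, hux⟩
        have hx0 : 0 < x := lt_trans hu hux
        have hz : 0 < x^2 - u^2 := by nlinarith
        have h1 : t^(1/α) < ((x^2-u^2)^α)^(1/α) :=
          Real.rpow_lt_rpow ht.le htf (by positivity)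
        rw [← Real.rpow_mul hz.le, mul_one_div_cancel (ne_of_gt hα), Real.rpow_one] at h1
        have h2 : u^2 + t^(1/α) < x^2 := by linarith
        calc Real.sqrt (u^2 + t^(1/α)) < Real.sqrt (x^2) := by
              apply Real.sqrt_lt_sqrt (by positivity) h2
          _ = x := Real.sqrt_sq hx0.le
      · intro hlt
        have htp : 0 < t^(1/α) := Real.rpow_pos_of_pos ht _
        have hux : u < x := by
          have h3 : u ≤ Real.sqrt (u^2 + t^(1/α)) := by
            calc u = Real.sqrt (u^2) := (Real.sqrt_sq hu.le).symm
              _ ≤ _ := Real.sqrt_le_sqrt (by linarith)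
          linarith
        have hx2 : u^2 + t^(1/α) < x^2 := by
          have := Real.lt_sq_of_sqrt_lt hlt
          linarith
        have hz : t^(1/α) < x^2 - u^2 := by linarith
        have h4 : (t^(1/α))^α < (x^2-u^2)^α := Real.rpow_lt_rpow htp.le hz hα
        rw [← Real.rpow_mul ht.le, one_div_mul_cancel (ne_of_gt hα), Real.rpow_one] at h4
        exact ⟨h4, hux⟩
    rw [setLIntegral_congr_fun_ae measurableSet_Ioi (ae_of_all _ hset)]
    -- convert RHS to lintegral
    have hmg : Measurable fun t : ℝ => (μ (Ioi (Real.sqrt (u^2 + t^(1/α))))).toReal := by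
      apply Measurable.ennreal_toReal
      have hm1 : Measurable fun s : ℝ => μ (Ioi s) :=
        Antitone.measurable (fun _ _ hst => measure_mono (Ioi_subset_Ioi hst))
      apply hm1.comp
      apply Real.continuous_sqrt.measurable.comp
      measurability
    rw [integral_eq_lintegral_of_nonneg_ae
      (ae_of_all _ fun t => ENNReal.toReal_nonneg) hmg.aestronglyMeasurable]
    congr 1
    apply lintegral_congr
    intro t
    rw [ENNReal.ofReal_toReal (hFne _)]
  rw [stepA]
  -- step B: t = s^α substitution
  have stepB : ∫ t in Ioi (0:ℝ), (μ (Ioi (Real.sqrt (u^2 + t^(1/α))))).toReal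
      = ∫ s in Ioi (0:ℝ), (α * s^(α-1)) * (μ (Ioi (Real.sqrt (u^2 + s)))).toReal := by
    rw [← integral_comp_rpow_Ioi_of_pos
      (g := fun t => (μ (Ioi (Real.sqrt (u^2 + t^(1/α))))).toReal) hα]
    apply setIntegral_congr_fun measurableSet_Ioi
    intro s hs
    rw [mem_Ioi] at hs
    have h5 : (s^α)^(1/α) = s := by
      rw [one_div, Real.rpow_rpow_inv hs.le (ne_of_gt hα)]
    simp only [smul_eq_mul]
    rw [h5]
  rw [stepB]
  -- step C: s = c * y substitution
  have stepC' : (∫ s in Ioi (0:ℝ), (α * s^(α-1)) * (μ (Ioi (Real.sqrt (u^2 + s)))).toReal)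
      = c * ∫ y in Ioi (0:ℝ),
          (α * (c*y)^(α-1)) * (μ (Ioi (Real.sqrt (u^2 + c*y)))).toReal := by
    have h := integral_comp_mul_left_Ioi
      (g := fun s => (α * s^(α-1)) * (μ (Ioi (Real.sqrt (u^2 + s)))).toReal) 0 hc
    simp only [mul_zero, smul_eq_mul] at h
    rw [h, ← mul_assoc, mul_inv_cancel₀ (ne_of_gt hc), one_mul]
  have stepD : ∫ y in Ioi (0:ℝ),
      (α * (c*y)^(α-1)) * (μ (Ioi (Real.sqrt (u^2 + c*y)))).toReal
      = c^(α-1) * ∫ y in Ioi (0:ℝ),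
          (α * y^(α-1)) * (μ (Ioi (Real.sqrt (u^2 + c*y)))).toReal := by
    rw [← integral_const_mul]
    apply setIntegral_congr_fun measurableSet_Ioi
    intro y hy
    rw [mem_Ioi] at hy
    dsimp only
    rw [Real.mul_rpow hc.le hy.le]
    ring
  rw [stepC', stepD, ← mul_assoc]
  congr 1
  rw [← Real.rpow_one_add' hc.le (by intro h; apply hα.ne'; linarith)]
  ring_nf

/-- If `F` (on `(0,∞)`, infinite upper endpoint) is in the Gumbel
max-domain of attraction with scaling function `w`, then for any `α > 0`,
`∫_u^∞ (x² - u²)^α dF(x) = (1+o(1)) Γ(α+1) (2/(u w(u)))^α u^{2α} F̄(u)` as `u → ∞`. -/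
theorem stmt3
    (μ : Measure ℝ) [IsProbabilityMeasure μ] (hsupp : μ (Iic 0) = 0)
    (hend : ∀ s : ℝ, 0 < μ (Ioi s))
    (Fbar : ℝ → ℝ) (hFbar : ∀ u, Fbar u = (μ (Ioi u)).toReal)
    (w : ℝ → ℝ) (hw : ∀ u > (0 : ℝ), 0 < w u)
    (hGumbel : ∀ x : ℝ,
      Tendsto (fun u => Fbar (u + x / w u) / Fbar u) atTop (nhds (Real.exp (-x))))
    (α : ℝ) (hα : 0 < α) :
    Tendsto (fun u =>
        (∫ x in Ioi u, (x ^ 2 - u ^ 2) ^ α ∂μ) /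
          (Real.Gamma (α + 1) * (2 / (u * w u)) ^ α * u ^ (2 * α) * Fbar u))
      atTop (nhds 1) := by
  have hFeq : Fbar = fun u => (μ (Ioi u)).toReal := funext hFbar
  subst hFeq
  set F : ℝ → ℝ := fun u => (μ (Ioi u)).toReal with hFdef
  have hFne : ∀ s : ℝ, μ (Ioi s) ≠ ⊤ := fun s => measure_ne_top μ _
  have hFpos : ∀ u, 0 < F u := fun u => ENNReal.toReal_pos (ne_of_gt (hend u)) (hFne u)
  have hanti : Antitone F := fun a b hab =>
    (ENNReal.toReal_le_toReal (hFne _) (hFne _)).mpr (measure_mono (Ioi_subset_Ioi hab))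
  have hF1 : ∀ s ≤ (0:ℝ), F s = 1 := by
    intro s hs
    have h2 : μ (Iic s) = 0 := measure_mono_null (Iic_subset_Iic.mpr hs) hsupp
    have h3 : μ (Ioi s) = 1 := by
      have := measure_compl (measurableSet_Iic (a := s)) (measure_ne_top μ _)
      rw [compl_Iic] at this
      rw [this, h2, measure_univ, tsub_zero]
    rw [hFdef]
    simp only [h3, ENNReal.toReal_one]
  have hF0 : Tendsto F atTop (nhds 0) := by
    have h1 : Tendsto (fun u => μ (Iic u)) atTop (nhds (μ univ)) := tendsto_measure_Iic_atTop μ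
    rw [measure_univ] at h1
    have h2 : Tendsto (fun u => (μ (Iic u)).toReal) atTop (nhds 1) := by
      have := (ENNReal.tendsto_toReal ENNReal.one_ne_top).comp h1
      exact this
    have h3 : Tendsto (fun u => 1 - (μ (Iic u)).toReal) atTop (nhds 0) := by
      have := tendsto_const_nhds (x := (1:ℝ)) (f := atTop).sub h2
      simpa using this
    apply h3.congr
    intro u
    have h4 : μ (Ioi u) = 1 - μ (Iic u) := by
      have := measure_compl (measurableSet_Iic (a := u)) (measure_ne_top μ _)
      rw [compl_Iic] at this
      rw [this, measure_univ]
    rw [hFdef]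
    simp only [h4]
    rw [ENNReal.toReal_sub_of_le prob_le_one ENNReal.one_ne_top, ENNReal.toReal_one]
  have hG : ∀ x : ℝ, Tendsto (fun u => F (u + x / w u) / F u) atTop (nhds (Real.exp (-x))) :=
    hGumbel
  have hΓ : 0 < Real.Gamma (α + 1) := Real.Gamma_pos_of_pos (by linarith)
  have hdct := aux_dct F w hanti hFpos hF1 hF0 hw hG α hα
  have key : Tendsto (fun u => (∫ y in Ioi (0:ℝ),
      (α * y ^ (α - 1)) * (F (Real.sqrt (u^2 + (2*u/w u)*y)) / F u)) / Real.Gamma (α+1))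
      atTop (nhds 1) := by
    have := hdct.div_const (Real.Gamma (α+1))
    rwa [div_self (ne_of_gt hΓ)] at this
  apply key.congr'
  filter_upwards [eventually_gt_atTop 0] with u hu
  have hwu : 0 < w u := hw u hu
  set c : ℝ := 2*u/w u with hc
  have hc0 : 0 < c := by rw [hc]; positivity
  have hcα : 0 < c ^ α := Real.rpow_pos_of_pos hc0 _
  -- denominator identity
  have hden : (2 / (u * w u)) ^ α * u ^ (2*α) = c ^ α := by
    have e1 : u ^ (2*α) = (u^2) ^ α := by
      rw [← Real.rpow_natCast u 2, ← Real.rpow_mul hu.le]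
      norm_num
    rw [e1, ← Real.mul_rpow (by positivity) (by positivity)]
    congr 1
    rw [hc]
    field_simp
  -- numerator identity
  have hnum := aux_identity μ α hα u hu c hc0
  -- ratio inside integral
  have hratio : (∫ y in Ioi (0:ℝ), (α * y^(α-1)) * (μ (Ioi (Real.sqrt (u^2 + c*y)))).toReal) / F u
      = ∫ y in Ioi (0:ℝ), (α * y ^ (α - 1)) * (F (Real.sqrt (u^2 + (2*u/w u)*y)) / F u) := by
    rw [← integral_div]
    apply setIntegral_congr_fun measurableSet_Ioi
    intro y hy
    rw [hFdef, ← hc]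
    ring
  have hFu := hFpos u
  have heq : (∫ x in Ioi u, (x^2 - u^2)^α ∂μ) /
        (Real.Gamma (α+1) * (2/(u*w u))^α * u^(2*α) * F u)
      = (∫ y in Ioi (0:ℝ), (α * y ^ (α - 1)) * (F (Real.sqrt (u^2 + (2*u/w u)*y)) / F u)) /
        Real.Gamma (α+1) := by
    rw [hnum, ← hratio]
    rw [show Real.Gamma (α+1) * (2/(u*w u))^α * u^(2*α) * F u
        = Real.Gamma (α+1) * ((2/(u*w u))^α * u^(2*α)) * F u by ring, hden]
    field_simp
  exact heq.symm
end
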